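/- Let (U_t) be a nonnegative process adapted to F_∞ := σ(∪_t F_t) on a filtered probability space, with E[sup_{t≥0} U_t] < ∞, such that t ↦ E[U_t | F_t] is càdlàg. If E[U_t | F_∞] → Y almost surely as t → ∞, then E[U_t | F_t] → Y almost surely as t → ∞. -/

import Mathlib

open MeasureTheory Set Filter Topology

lemma tt_abs_condexp {Ω : Type*} {m0 : MeasurableSpace Ω} {μ : Measure Ω}
    [IsProbabilityMeasure μ] {m' : MeasurableSpace Ω} (hle : m' ≤ m0) {f af : Ω → ℝ} (hf : Integrable f μ)
    (haf : af = fun ω => |f ω|) :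
    ∀ᵐ ω ∂μ, |(μ[f|m']) ω| ≤ (μ[af|m']) ω := by
  subst haf
  have h1 : μ[f|m'] ≤ᵐ[μ] μ[(fun ω => |f ω|)|m'] :=
    condExp_mono hf hf.abs (ae_of_all _ fun ω => le_abs_self _)
  have h2 : μ[-f|m'] ≤ᵐ[μ] μ[(fun ω => |f ω|)|m'] :=
    condExp_mono hf.neg hf.abs (ae_of_all _ fun ω => neg_le_abs _)
  filter_upwards [h1, h2, condExp_neg (μ := μ) (m := m') f] with ω hω1 hω2 hω3
  rw [abs_le]
  refine ⟨?_, hω1⟩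
  have : -(μ[f|m']) ω ≤ (μ[(fun ω => |f ω|)|m']) ω := by
    rw [← Pi.neg_apply, ← hω3]; exact hω2
  linarith

lemma tt_finset_max {Ω : Type*} {m : MeasurableSpace Ω} {μ : Measure Ω}
    [IsProbabilityMeasure μ] (ℱ : Filtration ℝ m) {C : Ω → ℝ}
    (hC : Integrable C μ) (hC0 : 0 ≤ᵐ[μ] C) {ε : ℝ} (hε : 0 < ε) (T : Finset ℝ) :
    μ {ω | ∃ t ∈ T, ε ≤ (μ[C|ℱ t]) ω} ≤ ENNReal.ofReal ((∫ ω, C ω ∂μ) / ε) := by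
  classical
  set g : ℝ → Ω → ℝ := fun t => μ[C|ℱ t] with hg
  set B : ℝ → Set Ω := fun t =>
    {ω | ε ≤ g t ω} ∩ ⋂ t' ∈ T.filter (· < t), {ω | g t' ω < ε} with hB
  have hgm : ∀ t, StronglyMeasurable[ℱ t] (g t) := fun t => stronglyMeasurable_condExp
  have hBmeas : ∀ t, MeasurableSet[ℱ t] (B t) := by
    intro t
    refine MeasurableSet.inter ?_ (Finset.measurableSet_biInter _ fun t' ht' => ?_)
    · exact (hgm t).measurable measurableSet_Ici
    · have ht'' : t' < t := (Finset.mem_filter.1 ht').2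
      exact ((hgm t').mono (ℱ.mono ht''.le)).measurable measurableSet_Iio
  have key : ∀ s ∈ T, ∀ t, s < t → ∀ ω, ω ∈ B t → g s ω < ε := by
    intro s hs t hst ω hω
    exact Set.mem_iInter₂.1 hω.2 s (Finset.mem_filter.2 ⟨hs, hst⟩)
  have hdisj : (↑T : Set ℝ).PairwiseDisjoint B := by
    intro s hs t ht hst
    rcases hst.lt_or_gt with h | h
    · exact Set.disjoint_left.2 fun ω h1 h2 => absurd h1.1 (not_le.2 (key s hs t h ω h2))
    · exact Set.disjoint_left.2 fun ω h1 h2 => absurd h2.1 (not_le.2 (key t ht s h ω h1))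
  have hcover : {ω | ∃ t ∈ T, ε ≤ g t ω} = ⋃ t ∈ T, B t := by
    ext ω
    constructor
    · rintro ⟨t, ht, hωt⟩
      have hne : (T.filter fun t => ε ≤ g t ω).Nonempty :=
        ⟨t, Finset.mem_filter.2 ⟨ht, hωt⟩⟩
      set t₀ := (T.filter fun t => ε ≤ g t ω).min' hne with ht₀
      have ht₀mem := Finset.min'_mem _ hne
      rw [Finset.mem_filter] at ht₀mem
      refine Set.mem_biUnion ht₀mem.1 ⟨ht₀mem.2, ?_⟩
      refine Set.mem_iInter₂.2 fun t' ht' => ?_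
      rw [Finset.mem_filter] at ht'
      by_contra hcon
      simp only [Set.mem_setOf_eq, not_lt] at hcon
      exact absurd (Finset.min'_le (T.filter fun t => ε ≤ g t ω) t' (Finset.mem_filter.2 ⟨ht'.1, hcon⟩))
        (not_le.2 ht'.2)
    · rintro hω
      rcases Set.mem_iUnion₂.1 hω with ⟨t, ht, hωt⟩
      exact ⟨t, ht, hωt.1⟩
  have hkey : ∀ t ∈ T, ε * (μ (B t)).toReal ≤ ∫ ω in B t, C ω ∂μ := by
    intro t _
    have h1 : ε * (μ (B t)).toReal ≤ ∫ ω in B t, g t ω ∂μ :=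
      setIntegral_ge_of_const_le_real (ℱ.le t _ (hBmeas t)) (measure_ne_top μ _)
        (fun ω hω => hω.1) integrable_condExp.integrableOn
    rwa [setIntegral_condExp (ℱ.le t) hC (hBmeas t)] at h1
  have hEm : μ {ω | ∃ t ∈ T, ε ≤ g t ω} = ∑ t ∈ T, μ (B t) := by
    rw [hcover]
    exact measure_biUnion_finset hdisj fun t ht => ℱ.le t _ (hBmeas t)
  have hsum : ε * (μ {ω | ∃ t ∈ T, ε ≤ g t ω}).toReal ≤ ∫ ω, C ω ∂μ := by
    rw [hEm, ENNReal.toReal_sum (fun t _ => measure_ne_top μ _), Finset.mul_sum]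
    calc ∑ t ∈ T, ε * (μ (B t)).toReal ≤ ∑ t ∈ T, ∫ ω in B t, C ω ∂μ :=
          Finset.sum_le_sum hkey
      _ = ∫ ω in ⋃ t ∈ T, B t, C ω ∂μ :=
          (integral_biUnion_finset T (fun t _ => ℱ.le t _ (hBmeas t)) hdisj
            (fun t _ => hC.integrableOn)).symm
      _ ≤ ∫ ω, C ω ∂μ := setIntegral_le_integral hC hC0
  have h2 : (μ {ω | ∃ t ∈ T, ε ≤ g t ω}).toReal ≤ (∫ ω, C ω ∂μ) / ε := by
    rw [le_div_iff₀ hε]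
    linarith
  calc μ {ω | ∃ t ∈ T, ε ≤ g t ω}
      = ENNReal.ofReal ((μ {ω | ∃ t ∈ T, ε ≤ g t ω}).toReal) :=
        (ENNReal.ofReal_toReal (measure_ne_top μ _)).symm
    _ ≤ ENNReal.ofReal ((∫ ω, C ω ∂μ) / ε) := ENNReal.ofReal_le_ofReal h2

lemma tt_count_max {Ω : Type*} {m : MeasurableSpace Ω} {μ : Measure Ω}
    [IsProbabilityMeasure μ] (ℱ : Filtration ℝ m) {C : Ω → ℝ}
    (hC : Integrable C μ) (hC0 : 0 ≤ᵐ[μ] C) {ε : ℝ} (hε : 0 < ε) :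
    μ {ω | ∃ q : ℚ, ε ≤ (μ[C|ℱ (q : ℝ)]) ω} ≤ ENNReal.ofReal ((∫ ω, C ω ∂μ) / ε) := by
  obtain ⟨u, hu⟩ := exists_surjective_nat ℚ
  set E : ℕ → Set Ω := fun n => {ω | ε ≤ (μ[C|ℱ ((u n : ℚ) : ℝ)]) ω} with hE
  have hset : {ω | ∃ q : ℚ, ε ≤ (μ[C|ℱ (q : ℝ)]) ω} = ⋃ n, E n := by
    ext ω
    simp only [Set.mem_setOf_eq, Set.mem_iUnion, hE]
    constructor
    · rintro ⟨q, hq⟩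
      obtain ⟨n, rfl⟩ := hu q
      exact ⟨n, hq⟩
    · rintro ⟨n, hn⟩
      exact ⟨u n, hn⟩
  rw [hset]
  refine le_of_tendsto' tendsto_measure_iUnion_accumulate fun k => ?_
  refine le_trans (measure_mono ?_)
    (tt_finset_max ℱ hC hC0 hε ((Finset.range (k + 1)).image fun n => ((u n : ℚ) : ℝ)))
  intro ω hω
  rcases Set.mem_accumulate.1 hω with ⟨n, hn, hωn⟩
  exact ⟨((u n : ℚ) : ℝ),
    Finset.mem_image_of_mem _ (Finset.mem_range.2 (Nat.lt_succ_of_le hn)), hωn⟩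


theorem tower_trick {Ω : Type*} {m : MeasurableSpace Ω} {μ : Measure Ω}
    [IsProbabilityMeasure μ]
    (ℱ : Filtration ℝ m) (U : ℝ → Ω → ℝ) (Y : Ω → ℝ)
    (hpos : ∀ t ω, 0 ≤ U t ω)
    (hmeas : ∀ t, Measurable (U t))
    (hbdd : ∀ ω, BddAbove (Set.range fun t => U t ω))
    (hsup : Integrable (fun ω => ⨆ t, U t ω) μ)
    (hcadlag : ∀ᵐ ω ∂μ, ∀ t : ℝ,
      ContinuousWithinAt (fun s => (μ[U s | ℱ s]) ω) (Ici t) t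
      ∧ (0 < t → ∃ l, Tendsto (fun s => (μ[U s | ℱ s]) ω) (𝓝[<] t) (𝓝 l)))
    (hlim : ∀ᵐ ω ∂μ,
      Tendsto (fun t => (μ[U t | ⨆ s, (ℱ s : MeasurableSpace Ω)]) ω) atTop (𝓝 (Y ω))) :
    ∀ᵐ ω ∂μ, Tendsto (fun t => (μ[U t | ℱ t]) ω) atTop (𝓝 (Y ω)) := by
  classical
  have hle : (⨆ s, (ℱ s : MeasurableSpace Ω)) ≤ m := iSup_le fun s => ℱ.le s
  have hℱle : ∀ t : ℝ, (ℱ t : MeasurableSpace Ω) ≤ ⨆ s, (ℱ s : MeasurableSpace Ω) :=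
    fun t => le_iSup (fun s : ℝ => (ℱ s : MeasurableSpace Ω)) t
  have hUint : ∀ t, Integrable (U t) μ := by
    intro t
    refine hsup.mono' (hmeas t).aestronglyMeasurable (ae_of_all _ fun ω => ?_)
    rw [Real.norm_eq_abs, abs_of_nonneg (hpos t ω)]
    exact le_ciSup (hbdd ω) t
  set W : ℝ → Ω → ℝ := fun t => μ[U t|(⨆ s, (ℱ s : MeasurableSpace Ω))] with hWdef
  set G : Ω → ℝ := μ[(fun ω => ⨆ t, U t ω)|(⨆ s, (ℱ s : MeasurableSpace Ω))] with hGdef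
  have hGint : Integrable G μ := integrable_condExp
  have hWint : ∀ t : ℝ, Integrable (W t) μ := fun t => integrable_condExp
  have hWmeas : ∀ t, Measurable[m] (W t) := fun t =>
    (stronglyMeasurable_condExp.mono hle).measurable
  have hWbd : ∀ t : ℝ, ∀ᵐ ω ∂μ, |W t ω| ≤ G ω := by
    intro t
    have h0 : (0 : Ω → ℝ) ≤ᵐ[μ] W t := condExp_nonneg (ae_of_all _ fun ω => hpos t ω)
    have h1 : W t ≤ᵐ[μ] G :=
      condExp_mono (hUint t) hsup (ae_of_all _ fun ω => le_ciSup (hbdd ω) t)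
    filter_upwards [h0, h1] with ω h0 h1
    rwa [abs_of_nonneg h0]
  have hlimW : ∀ᵐ ω ∂μ, Tendsto (fun t => W t ω) atTop (𝓝 (Y ω)) := hlim
  have hcastℕ : Tendsto (fun n : ℕ => (n : ℝ)) atTop atTop := tendsto_natCast_atTop_atTop
  have hcastℚ : Tendsto (fun q : ℚ => (q : ℝ)) atTop atTop := by
    refine tendsto_atTop_atTop.2 fun b => ?_
    obtain ⟨q0, hq0⟩ := exists_rat_gt b
    exact ⟨q0, fun a ha => hq0.le.trans (by exact_mod_cast ha)⟩
  have hYae : AEMeasurable Y μ := by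
    refine aemeasurable_of_tendsto_metrizable_ae atTop
      (fun n : ℕ => (hWmeas (n : ℝ)).aemeasurable) ?_
    filter_upwards [hlimW] with ω hω
    exact hω.comp hcastℕ
  obtain ⟨Y', hY'meas, hYY'⟩ : ∃ Y' : Ω → ℝ, Measurable[m] Y' ∧ Y =ᵐ[μ] Y' :=
    ⟨hYae.mk Y, hYae.measurable_mk, hYae.ae_eq_mk⟩
  have hlimW' : ∀ᵐ ω ∂μ, Tendsto (fun t => W t ω) atTop (𝓝 (Y' ω)) := by
    filter_upwards [hlimW, hYY'] with ω h1 h2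
    rwa [h2] at h1
  have hlimQ : ∀ᵐ ω ∂μ, Tendsto (fun q : ℚ => W (q : ℝ) ω) atTop (𝓝 (Y' ω)) := by
    filter_upwards [hlimW'] with ω h
    exact h.comp hcastℚ
  have hlimN : ∀ᵐ ω ∂μ, Tendsto (fun n : ℕ => W (n : ℝ) ω) atTop (𝓝 (Y' ω)) := by
    filter_upwards [hlimW'] with ω h
    exact h.comp hcastℕ
  have hWbdQ : ∀ᵐ ω ∂μ, ∀ q : ℚ, |W (q : ℝ) ω| ≤ G ω := ae_all_iff.2 fun q => hWbd q
  have hYbd : ∀ᵐ ω ∂μ, |Y' ω| ≤ G ω := by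
    have hWbdN : ∀ᵐ ω ∂μ, ∀ n : ℕ, |W (n : ℝ) ω| ≤ G ω := ae_all_iff.2 fun n => hWbd n
    filter_upwards [hWbdN, hlimN] with ω hb ht
    exact le_of_tendsto ht.abs (Eventually.of_forall fun n => hb n)
  have hY'int : Integrable Y' μ :=
    hGint.mono' hY'meas.aestronglyMeasurable (hYbd.mono fun ω h => by
      rwa [Real.norm_eq_abs])
  have hWidem : ∀ t : ℝ, μ[W t|(⨆ s, (ℱ s : MeasurableSpace Ω))] =ᵐ[μ] W t := fun t => condExp_condExp_of_le le_rfl hle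
  -- Y' is a.e. equal to its conditional expectation given mS
  have hYcond : μ[Y'|(⨆ s, (ℱ s : MeasurableSpace Ω))] =ᵐ[μ] Y' := by
    set a : ℕ → ℝ := fun n => ∫ ω, |Y' ω - W (n : ℝ) ω| ∂μ with ha
    have hbd2 : Integrable (fun ω => |G ω| + |G ω|) μ := hGint.abs.add hGint.abs
    have haL1 : Tendsto a atTop (𝓝 0) := by
      have h := tendsto_integral_of_dominated_convergence (μ := μ)
        (F := fun n ω => |Y' ω - W (n : ℝ) ω|) (f := fun _ => (0 : ℝ))
        (bound := fun ω => |G ω| + |G ω|)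
        (fun n => ((hY'meas.sub (hWmeas _)).abs).aestronglyMeasurable)
        hbd2 ?_ ?_
      · simpa using h
      · intro n
        filter_upwards [hYbd, hWbd (n : ℝ)] with ω h1 h2
        have h3 : |Y' ω - W (n : ℝ) ω| ≤ |Y' ω| + |W (n : ℝ) ω| := abs_sub _ _
        have h4 := le_abs_self (G ω)
        rw [Real.norm_eq_abs, abs_abs]
        linarith
      · filter_upwards [hlimN] with ω h
        have := (tendsto_const_nhds (x := Y' ω)).sub h
        simpa using this.abs
    have hkey : ∀ n : ℕ, ∫ ω, |(μ[Y'|(⨆ s, (ℱ s : MeasurableSpace Ω))]) ω - Y' ω| ∂μ ≤ 2 * a n := by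
      intro n
      have e1 : (fun ω => (μ[Y'|(⨆ s, (ℱ s : MeasurableSpace Ω))]) ω - Y' ω) =ᵐ[μ]
          fun ω => (μ[(fun ω => Y' ω - W (n : ℝ) ω)|(⨆ s, (ℱ s : MeasurableSpace Ω))]) ω + (W (n : ℝ) ω - Y' ω) := by
        have e2 : μ[(fun ω => Y' ω - W (n : ℝ) ω)|(⨆ s, (ℱ s : MeasurableSpace Ω))] =ᵐ[μ] μ[Y'|(⨆ s, (ℱ s : MeasurableSpace Ω))] - μ[W (n : ℝ)|(⨆ s, (ℱ s : MeasurableSpace Ω))] :=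
          condExp_sub hY'int (hWint _) _
        filter_upwards [e2, hWidem (n : ℝ)] with ω h2 h3
        have h2' : (μ[(fun ω => Y' ω - W (n : ℝ) ω)|(⨆ s, (ℱ s : MeasurableSpace Ω))]) ω
            = (μ[Y'|(⨆ s, (ℱ s : MeasurableSpace Ω))]) ω - (μ[W (n : ℝ)|(⨆ s, (ℱ s : MeasurableSpace Ω))]) ω := h2
        have h3' : (μ[W (n : ℝ)|(⨆ s, (ℱ s : MeasurableSpace Ω))]) ω = W (n : ℝ) ω := h3
        rw [h2', h3']
        ring
      calc ∫ ω, |(μ[Y'|(⨆ s, (ℱ s : MeasurableSpace Ω))]) ω - Y' ω| ∂μ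
          = ∫ ω, |(μ[(fun ω => Y' ω - W (n : ℝ) ω)|(⨆ s, (ℱ s : MeasurableSpace Ω))]) ω + (W (n : ℝ) ω - Y' ω)| ∂μ := by
            refine integral_congr_ae ?_
            filter_upwards [e1] with ω h
            rw [h]
        _ ≤ ∫ ω, (|(μ[(fun ω => Y' ω - W (n : ℝ) ω)|(⨆ s, (ℱ s : MeasurableSpace Ω))]) ω| + |W (n : ℝ) ω - Y' ω|) ∂μ := by
            refine integral_mono ?_ ?_ fun ω => abs_add_le _ _
            · exact (integrable_condExp.add ((hWint _).sub hY'int)).abs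
            · exact integrable_condExp.abs.add ((hWint _).sub hY'int).abs
        _ = (∫ ω, |(μ[(fun ω => Y' ω - W (n : ℝ) ω)|(⨆ s, (ℱ s : MeasurableSpace Ω))]) ω| ∂μ)
            + ∫ ω, |W (n : ℝ) ω - Y' ω| ∂μ :=
            integral_add integrable_condExp.abs ((hWint _).sub hY'int).abs
        _ ≤ a n + a n := by
            refine add_le_add ?_ (le_of_eq ?_)
            · exact integral_abs_condExp_le _
            · exact integral_congr_ae (ae_of_all _ fun ω => abs_sub_comm _ _)
        _ = 2 * a n := by ring
    have hc0 : 0 ≤ ∫ ω, |(μ[Y'|(⨆ s, (ℱ s : MeasurableSpace Ω))]) ω - Y' ω| ∂μ := integral_nonneg fun ω => abs_nonneg _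
    have hc : ∫ ω, |(μ[Y'|(⨆ s, (ℱ s : MeasurableSpace Ω))]) ω - Y' ω| ∂μ = 0 := by
      have h2 : Tendsto (fun n => 2 * a n) atTop (𝓝 0) := by
        simpa using haL1.const_mul 2
      have h3 := ge_of_tendsto' h2 fun n => hkey n
      linarith
    have h4 := (integral_eq_zero_iff_of_nonneg_ae (ae_of_all _ fun ω => abs_nonneg _)
      (integrable_condExp.sub hY'int).abs).1 (by
        rw [← hc]
        exact integral_congr_ae (ae_of_all _ fun ω => rfl))
    filter_upwards [h4] with ω h
    have h' : |(μ[Y'|(⨆ s, (ℱ s : MeasurableSpace Ω))] - Y') ω| = 0 := h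
    rw [Pi.sub_apply, abs_eq_zero, sub_eq_zero] at h'
    exact h'
  -- the natural-number skeleton filtration
  set 𝒢 : Filtration ℕ m :=
    { seq := fun n => ℱ (n : ℝ)
      mono' := fun i j hij => ℱ.mono (by exact_mod_cast hij)
      le' := fun n => ℱ.le _ } with h𝒢
  have hGsup : (⨆ n : ℕ, (𝒢 n : MeasurableSpace Ω)) = ⨆ s, (ℱ s : MeasurableSpace Ω) := by
    refine le_antisymm (iSup_le fun n => hℱle (n : ℝ)) ?_
    refine iSup_le fun t => ?_
    exact le_trans (ℱ.mono (Nat.le_ceil t))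
      (le_iSup (fun n : ℕ => (𝒢 n : MeasurableSpace Ω)) ⌈t⌉₊)
  set D : ℕ → Ω → ℝ := fun n => μ[Y'|𝒢 n] - μ[Y'|⨆ n, 𝒢 n] with hD
  set K : ℕ → Ω → ℝ := fun n ω => |D n ω| with hK
  have hinfeq : μ[Y'|⨆ n, 𝒢 n] =ᵐ[μ] Y' := by
    rw [hGsup]
    exact hYcond
  have hDint : ∀ n, Integrable (D n) μ := fun n => integrable_condExp.sub integrable_condExp
  have hKint : ∀ n, Integrable (K n) μ := fun n => (hDint n).abs
  have hinfle : (⨆ n : ℕ, (𝒢 n : MeasurableSpace Ω)) ≤ m := by rw [hGsup]; exact hle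
  have hDmeas : ∀ n, Measurable[m] (D n) := fun n =>
    ((stronglyMeasurable_condExp.mono (𝒢.le n)).measurable).sub
      ((stronglyMeasurable_condExp.mono hinfle).measurable)
  have hDae : ∀ᵐ ω ∂μ, Tendsto (fun n => D n ω) atTop (𝓝 0) := by
    filter_upwards [tendsto_ae_condExp (ℱ := 𝒢) (μ := μ) Y'] with ω h
    have h2 := h.sub (tendsto_const_nhds (x := (μ[Y'|⨆ n, 𝒢 n]) ω))
    simpa [hD] using h2
  have hKtend : ∀ᵐ ω ∂μ, Tendsto (fun n => K n ω) atTop (𝓝 0) := by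
    filter_upwards [hDae] with ω h
    simpa [hK] using h.abs
  have hKL1 : Tendsto (fun n => ∫ ω, K n ω ∂μ) atTop (𝓝 0) := by
    have h1 := tendsto_eLpNorm_condExp (ℱ := 𝒢) (μ := μ) Y'
    have h2 : ∀ n, ∫ ω, K n ω ∂μ = (eLpNorm (D n) 1 μ).toReal := by
      intro n
      have : ∫ ω, K n ω ∂μ = ∫ ω, ‖D n ω‖ ∂μ := by
        simp [hK, Real.norm_eq_abs]
      rw [this, integral_norm_eq_lintegral_enorm (hDmeas n).aestronglyMeasurable,
        ← eLpNorm_one_eq_lintegral_enorm]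
    simp only [h2]
    have h3 : Tendsto (fun n => eLpNorm (D n) 1 μ) atTop (𝓝 0) := h1
    have h4 := (ENNReal.tendsto_toReal (by simp : (0 : ENNReal) ≠ ⊤)).comp h3
    simpa [Function.comp_def] using h4
  -- the running suprema R N
  set R : ℕ → Ω → ℝ :=
    fun N ω => ⨆ q : ℚ, if (N : ℚ) ≤ q then |W (q : ℝ) ω - Y' ω| else 0 with hR
  have hRmeas : ∀ N, Measurable[m] (R N) := by
    intro N
    refine Measurable.iSup fun q => ?_
    by_cases h : (N : ℚ) ≤ q
    · simpa [h] using ((hWmeas (q : ℝ)).sub hY'meas).abs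
    · simpa [h] using measurable_const
  have hRnn : ∀ N ω, 0 ≤ R N ω := fun N ω => Real.iSup_nonneg fun q => by
    split_ifs with h
    exacts [abs_nonneg _, le_rfl]
  have hRbd : ∀ᵐ ω ∂μ, ∀ (N : ℕ) (q : ℚ),
      (if (N : ℚ) ≤ q then |W (q : ℝ) ω - Y' ω| else 0) ≤ |G ω| + |G ω| := by
    filter_upwards [hWbdQ, hYbd] with ω h1 h2
    intro N q
    split_ifs with h
    · have h3 := h1 q
      have h4 := le_abs_self (G ω)
      have h5 : |W (q : ℝ) ω - Y' ω| ≤ |W (q : ℝ) ω| + |Y' ω| := abs_sub _ _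
      linarith
    · positivity
  have hRle : ∀ᵐ ω ∂μ, ∀ N : ℕ, R N ω ≤ |G ω| + |G ω| := by
    filter_upwards [hRbd] with ω h N
    exact ciSup_le fun q => h N q
  have hRub : ∀ᵐ ω ∂μ, ∀ (N : ℕ) (q : ℚ), (N : ℚ) ≤ q → |W (q : ℝ) ω - Y' ω| ≤ R N ω := by
    filter_upwards [hRbd] with ω h N q hq
    have hb : BddAbove (Set.range fun q : ℚ =>
        if (N : ℚ) ≤ q then |W (q : ℝ) ω - Y' ω| else 0) := by
      refine ⟨|G ω| + |G ω|, ?_⟩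
      rintro x ⟨q', rfl⟩
      exact h N q'
    have h6 := le_ciSup hb q
    rwa [if_pos hq] at h6
  have hRint : ∀ N, Integrable (R N) μ := by
    intro N
    refine (hGint.abs.add hGint.abs).mono' (hRmeas N).aestronglyMeasurable ?_
    filter_upwards [hRle] with ω h
    rw [Real.norm_eq_abs, abs_of_nonneg (hRnn N ω)]
    exact h N
  have hRtend : ∀ᵐ ω ∂μ, Tendsto (fun N => R N ω) atTop (𝓝 0) := by
    filter_upwards [hlimQ] with ω h
    rw [Metric.tendsto_atTop]
    intro ε hε
    obtain ⟨M, hM⟩ := (Metric.tendsto_atTop.1 h) (ε / 2) (half_pos hε)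
    refine ⟨⌈M⌉₊, fun N hN => ?_⟩
    have hRN : R N ω ≤ ε / 2 := by
      refine ciSup_le fun q => ?_
      split_ifs with hq
      · have hMq : M ≤ q := le_trans (Nat.le_ceil M) (le_trans (by exact_mod_cast hN) hq)
        have h7 := hM q hMq
        rw [Real.dist_eq] at h7
        exact h7.le
      · linarith
    rw [Real.dist_eq, sub_zero, abs_of_nonneg (hRnn N ω)]
    linarith
  have hRL1 : Tendsto (fun N => ∫ ω, R N ω ∂μ) atTop (𝓝 0) := by
    have h := tendsto_integral_of_dominated_convergence (μ := μ)
      (F := fun N ω => R N ω) (f := fun _ => (0 : ℝ)) (bound := fun ω => |G ω| + |G ω|)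
      (fun N => (hRmeas N).aestronglyMeasurable) (hGint.abs.add hGint.abs) ?_ hRtend
    · simpa using h
    · intro N
      filter_upwards [hRle] with ω h
      rw [Real.norm_eq_abs, abs_of_nonneg (hRnn N ω)]
      exact h N
  -- Step A : the key pointwise inequality
  have hA : ∀ᵐ ω ∂μ, ∀ (N : ℕ) (q : ℚ), (N : ℚ) ≤ q →
      |(μ[U (q : ℝ)|ℱ (q : ℝ)]) ω - Y' ω| ≤
        (μ[R N|ℱ (q : ℝ)]) ω + (μ[K N|ℱ (q : ℝ)]) ω + K N ω := by
    rw [ae_all_iff]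
    intro N
    rw [ae_all_iff]
    intro q
    by_cases hNq : (N : ℚ) ≤ q
    swap
    · filter_upwards with ω h
      exact absurd h hNq
    have hNq' : (N : ℝ) ≤ (q : ℝ) := by exact_mod_cast hNq
    have f1 : μ[W (q : ℝ)|ℱ (q : ℝ)] =ᵐ[μ] μ[U (q : ℝ)|ℱ (q : ℝ)] :=
      condExp_condExp_of_le (hℱle (q : ℝ)) hle
    have f2 : μ[(fun ω => W (q : ℝ) ω - Y' ω)|ℱ (q : ℝ)] =ᵐ[μ]
        μ[W (q : ℝ)|ℱ (q : ℝ)] - μ[Y'|ℱ (q : ℝ)] := condExp_sub (hWint _) hY'int _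
    have f3 : μ[(fun ω => Y' ω - (μ[Y'|𝒢 N]) ω)|ℱ (q : ℝ)] =ᵐ[μ]
        μ[Y'|ℱ (q : ℝ)] - μ[μ[Y'|𝒢 N]|ℱ (q : ℝ)] := condExp_sub hY'int integrable_condExp _
    have f4 : μ[μ[Y'|𝒢 N]|ℱ (q : ℝ)] = μ[Y'|𝒢 N] :=
      condExp_of_stronglyMeasurable (ℱ.le _)
        ((stronglyMeasurable_condExp (m := 𝒢 N)).mono (ℱ.mono hNq')) integrable_condExp
    have f5 : (fun ω => Y' ω - (μ[Y'|𝒢 N]) ω) =ᵐ[μ] fun ω => -(D N ω) := by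
      filter_upwards [hinfeq] with ω h
      simp only [hD, Pi.sub_apply]
      rw [h]
      ring
    have f6 : μ[(fun ω => Y' ω - (μ[Y'|𝒢 N]) ω)|ℱ (q : ℝ)] =ᵐ[μ]
        μ[(fun ω => -(D N ω))|ℱ (q : ℝ)] := condExp_congr_ae f5
    have f7 : μ[(fun ω => -(D N ω))|ℱ (q : ℝ)] =ᵐ[μ] -μ[D N|ℱ (q : ℝ)] := condExp_neg _ _
    have f8 : ∀ᵐ ω ∂μ, |(μ[(fun ω => W (q : ℝ) ω - Y' ω)|ℱ (q : ℝ)]) ω| ≤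
        (μ[R N|ℱ (q : ℝ)]) ω := by
      have habs : ∀ᵐ ω ∂μ, |(μ[(fun ω => W (q : ℝ) ω - Y' ω)|ℱ (q : ℝ)]) ω| ≤
          (μ[(fun ω => |W (q : ℝ) ω - Y' ω|)|ℱ (q : ℝ)]) ω :=
        tt_abs_condexp (μ := μ) (ℱ.le (q : ℝ)) ((hWint (q : ℝ)).sub hY'int) rfl
      have hmono : (fun ω => |W (q : ℝ) ω - Y' ω|) ≤ᵐ[μ] R N :=
        hRub.mono fun ω h => h N q hNq
      have h8 : μ[(fun ω => |W (q : ℝ) ω - Y' ω|)|ℱ (q : ℝ)] ≤ᵐ[μ] μ[R N|ℱ (q : ℝ)] :=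
        condExp_mono ((hWint (q : ℝ)).sub hY'int).abs (hRint N) hmono
      filter_upwards [habs, h8] with ω ha hb
      exact le_trans ha hb
    have f9 : ∀ᵐ ω ∂μ, |(μ[D N|ℱ (q : ℝ)]) ω| ≤ (μ[K N|ℱ (q : ℝ)]) ω :=
      tt_abs_condexp (μ := μ) (ℱ.le (q : ℝ)) (hDint N) rfl
    filter_upwards [f1, f2, f3, f6, f7, f8, f9, hinfeq] with ω h1 h2 h3 h6 h7 h8 h9 hinfw
    intro _
    have h2' : (μ[(fun ω => W (q : ℝ) ω - Y' ω)|ℱ (q : ℝ)]) ω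
        = (μ[W (q : ℝ)|ℱ (q : ℝ)]) ω - (μ[Y'|ℱ (q : ℝ)]) ω := h2
    have h3' : (μ[(fun ω => Y' ω - (μ[Y'|𝒢 N]) ω)|ℱ (q : ℝ)]) ω
        = (μ[Y'|ℱ (q : ℝ)]) ω - (μ[μ[Y'|𝒢 N]|ℱ (q : ℝ)]) ω := h3
    have h4' : (μ[μ[Y'|𝒢 N]|ℱ (q : ℝ)]) ω = (μ[Y'|𝒢 N]) ω := congrFun f4 ω
    have h7' : (μ[(fun ω => -(D N ω))|ℱ (q : ℝ)]) ω = -(μ[D N|ℱ (q : ℝ)]) ω := h7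
    have hDval : D N ω = (μ[Y'|𝒢 N]) ω - Y' ω := by
      simp only [hD, Pi.sub_apply]
      rw [hinfw]
    have heq : (μ[U (q : ℝ)|ℱ (q : ℝ)]) ω - Y' ω
        = (μ[(fun ω => W (q : ℝ) ω - Y' ω)|ℱ (q : ℝ)]) ω
          - (μ[D N|ℱ (q : ℝ)]) ω + D N ω := by
      have h6' := h6.trans h7'
      rw [← h1]
      rw [h3', h4'] at h6'
      -- h6' : μ[Y'|ℱ q] ω - μ[Y'|𝒢 N] ω = - μ[D N|ℱ q] ω
      rw [h2']
      rw [hDval]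
      linarith
    rw [heq]
    have t1 := abs_add_le ((μ[(fun ω => W (q : ℝ) ω - Y' ω)|ℱ (q : ℝ)]) ω
      - (μ[D N|ℱ (q : ℝ)]) ω) (D N ω)
    have t2 := abs_sub ((μ[(fun ω => W (q : ℝ) ω - Y' ω)|ℱ (q : ℝ)]) ω)
      ((μ[D N|ℱ (q : ℝ)]) ω)
    have t3 : |D N ω| = K N ω := by rw [hK]
    linarith
  -- Step B : for each ε the "bad" set is null
  have hstep : ∀ ε : ℝ, 0 < ε →
      μ {ω | ¬ ∃ M : ℕ, ∀ q : ℚ, (M : ℚ) ≤ q →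
        |(μ[U (q : ℝ)|ℱ (q : ℝ)]) ω - Y' ω| ≤ 3 * ε} = 0 := by
    intro ε hε
    have hbound : ∀ N : ℕ,
        μ {ω | ¬ ∃ M : ℕ, ∀ q : ℚ, (M : ℚ) ≤ q →
          |(μ[U (q : ℝ)|ℱ (q : ℝ)]) ω - Y' ω| ≤ 3 * ε}
        ≤ ENNReal.ofReal ((∫ ω, R N ω ∂μ) / ε)
          + (ENNReal.ofReal ((∫ ω, K N ω ∂μ) / ε) + μ {ω | ε ≤ K N ω}) := by
      intro N
      have hsub : {ω | ¬ ∃ M : ℕ, ∀ q : ℚ, (M : ℚ) ≤ q →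
            |(μ[U (q : ℝ)|ℱ (q : ℝ)]) ω - Y' ω| ≤ 3 * ε}
          ⊆ {ω | ¬ ∀ (N : ℕ) (q : ℚ), (N : ℚ) ≤ q →
              |(μ[U (q : ℝ)|ℱ (q : ℝ)]) ω - Y' ω| ≤
                (μ[R N|ℱ (q : ℝ)]) ω + (μ[K N|ℱ (q : ℝ)]) ω + K N ω}
            ∪ ({ω | ∃ q : ℚ, ε ≤ (μ[R N|ℱ (q : ℝ)]) ω}
            ∪ ({ω | ∃ q : ℚ, ε ≤ (μ[K N|ℱ (q : ℝ)]) ω} ∪ {ω | ε ≤ K N ω})) := by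
        intro ω hω
        by_cases hS : ∀ (N : ℕ) (q : ℚ), (N : ℚ) ≤ q →
            |(μ[U (q : ℝ)|ℱ (q : ℝ)]) ω - Y' ω| ≤
              (μ[R N|ℱ (q : ℝ)]) ω + (μ[K N|ℱ (q : ℝ)]) ω + K N ω
        swap
        · exact Or.inl hS
        by_cases h1 : ∃ q : ℚ, ε ≤ (μ[R N|ℱ (q : ℝ)]) ω
        · exact Or.inr (Or.inl h1)
        by_cases h2 : ∃ q : ℚ, ε ≤ (μ[K N|ℱ (q : ℝ)]) ω
        · exact Or.inr (Or.inr (Or.inl h2))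
        by_cases h3 : ε ≤ K N ω
        · exact Or.inr (Or.inr (Or.inr h3))
        exfalso
        apply hω
        push_neg at h1 h2 h3
        refine ⟨N, fun q hq => ?_⟩
        have := hS N q hq
        have hr := h1 q
        have hk := h2 q
        linarith [this, hr.le, hk.le, h3.le]
      calc μ {ω | ¬ ∃ M : ℕ, ∀ q : ℚ, (M : ℚ) ≤ q →
            |(μ[U (q : ℝ)|ℱ (q : ℝ)]) ω - Y' ω| ≤ 3 * ε}
          ≤ μ ({ω | ¬ ∀ (N : ℕ) (q : ℚ), (N : ℚ) ≤ q →
                |(μ[U (q : ℝ)|ℱ (q : ℝ)]) ω - Y' ω| ≤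
                  (μ[R N|ℱ (q : ℝ)]) ω + (μ[K N|ℱ (q : ℝ)]) ω + K N ω}
              ∪ ({ω | ∃ q : ℚ, ε ≤ (μ[R N|ℱ (q : ℝ)]) ω}
              ∪ ({ω | ∃ q : ℚ, ε ≤ (μ[K N|ℱ (q : ℝ)]) ω} ∪ {ω | ε ≤ K N ω}))) :=
            measure_mono hsub
        _ ≤ μ {ω | ¬ ∀ (N : ℕ) (q : ℚ), (N : ℚ) ≤ q →
                |(μ[U (q : ℝ)|ℱ (q : ℝ)]) ω - Y' ω| ≤
                  (μ[R N|ℱ (q : ℝ)]) ω + (μ[K N|ℱ (q : ℝ)]) ω + K N ω}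
            + μ ({ω | ∃ q : ℚ, ε ≤ (μ[R N|ℱ (q : ℝ)]) ω}
              ∪ ({ω | ∃ q : ℚ, ε ≤ (μ[K N|ℱ (q : ℝ)]) ω} ∪ {ω | ε ≤ K N ω})) :=
            measure_union_le _ _
        _ = μ ({ω | ∃ q : ℚ, ε ≤ (μ[R N|ℱ (q : ℝ)]) ω}
              ∪ ({ω | ∃ q : ℚ, ε ≤ (μ[K N|ℱ (q : ℝ)]) ω} ∪ {ω | ε ≤ K N ω})) := by
            rw [ae_iff.1 hA, zero_add]
        _ ≤ μ {ω | ∃ q : ℚ, ε ≤ (μ[R N|ℱ (q : ℝ)]) ω}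
            + μ ({ω | ∃ q : ℚ, ε ≤ (μ[K N|ℱ (q : ℝ)]) ω} ∪ {ω | ε ≤ K N ω}) :=
            measure_union_le _ _
        _ ≤ μ {ω | ∃ q : ℚ, ε ≤ (μ[R N|ℱ (q : ℝ)]) ω}
            + (μ {ω | ∃ q : ℚ, ε ≤ (μ[K N|ℱ (q : ℝ)]) ω} + μ {ω | ε ≤ K N ω}) :=
            add_le_add le_rfl (measure_union_le _ _)
        _ ≤ ENNReal.ofReal ((∫ ω, R N ω ∂μ) / ε)
            + (ENNReal.ofReal ((∫ ω, K N ω ∂μ) / ε) + μ {ω | ε ≤ K N ω}) := by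
            refine add_le_add (tt_count_max ℱ (hRint N) (ae_of_all _ (hRnn N)) hε)
              (add_le_add (tt_count_max ℱ (hKint N) (ae_of_all _ fun ω => abs_nonneg _) hε)
                le_rfl)
    -- the right-hand side tends to 0
    have ht1 : Tendsto (fun N => ENNReal.ofReal ((∫ ω, R N ω ∂μ) / ε)) atTop (𝓝 0) := by
      have := ENNReal.tendsto_ofReal (hRL1.div_const ε)
      simpa using this
    have ht2 : Tendsto (fun N => ENNReal.ofReal ((∫ ω, K N ω ∂μ) / ε)) atTop (𝓝 0) := by
      have := ENNReal.tendsto_ofReal (hKL1.div_const ε)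
      simpa using this
    have ht3 : Tendsto (fun N => μ {ω | ε ≤ K N ω}) atTop (𝓝 0) := by
      have hTIM : TendstoInMeasure μ D atTop (fun _ => (0 : ℝ)) :=
        tendstoInMeasure_of_tendsto_ae (fun n => (hDmeas n).aestronglyMeasurable)
          (by filter_upwards [hDae] with ω h; exact h)
      have hc := hTIM (ENNReal.ofReal ε) (ENNReal.ofReal_pos.2 hε)
      have hceq : ∀ n, {x | ENNReal.ofReal ε ≤ edist (D n x) ((fun _ => (0 : ℝ)) x)} = {x | ε ≤ K n x} := by
        intro n
        ext x
        simp [edist_dist, Real.dist_eq, hK, ENNReal.ofReal_le_ofReal_iff (abs_nonneg _)]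
      simpa only [hceq] using hc
    have htot : Tendsto (fun N => ENNReal.ofReal ((∫ ω, R N ω ∂μ) / ε)
        + (ENNReal.ofReal ((∫ ω, K N ω ∂μ) / ε) + μ {ω | ε ≤ K N ω})) atTop (𝓝 0) := by
      have := ht1.add (ht2.add ht3)
      simpa using this
    have hfin := ge_of_tendsto' htot hbound
    exact le_antisymm hfin bot_le
  -- convergence along the rationals
  have hGood : ∀ᵐ ω ∂μ, ∀ k : ℕ, ∃ M : ℕ, ∀ q : ℚ, (M : ℚ) ≤ q →
      |(μ[U (q : ℝ)|ℱ (q : ℝ)]) ω - Y' ω| ≤ 3 * ((k : ℝ) + 1)⁻¹ := by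
    rw [ae_all_iff]
    intro k
    have h := hstep ((k : ℝ) + 1)⁻¹ (by positivity)
    exact ae_iff.2 h
  have hQlim : ∀ᵐ ω ∂μ, Tendsto (fun q : ℚ => (μ[U (q : ℝ)|ℱ (q : ℝ)]) ω) atTop
      (𝓝 (Y' ω)) := by
    filter_upwards [hGood] with ω h
    rw [Metric.tendsto_atTop]
    intro ε hε
    obtain ⟨k, hk⟩ := exists_nat_gt (3 / ε)
    have hkpos : (0 : ℝ) < (k : ℝ) + 1 := by positivity
    have hk3 : 3 * ((k : ℝ) + 1)⁻¹ < ε := by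
      rw [div_lt_iff₀ hε] at hk
      rw [mul_inv_lt_iff₀ hkpos]
      nlinarith
    obtain ⟨M, hM⟩ := h k
    refine ⟨(M : ℚ), fun q hq => ?_⟩
    rw [Real.dist_eq]
    calc |(μ[U (q : ℝ)|ℱ (q : ℝ)]) ω - Y' ω| ≤ 3 * ((k : ℝ) + 1)⁻¹ := hM q hq
      _ < ε := hk3
  -- conclusion : pass from rationals to reals using right-continuity
  filter_upwards [hQlim, hcadlag, hYY'] with ω hq hc hy
  rw [show Y ω = Y' ω from hy]
  rw [Metric.tendsto_atTop]
  intro ε hε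
  obtain ⟨M, hM⟩ := Metric.tendsto_atTop.1 hq (ε / 2) (half_pos hε)
  refine ⟨(M : ℝ), fun t ht => ?_⟩
  have hct : ContinuousWithinAt (fun s => (μ[U s|ℱ s]) ω) (Ici t) t := (hc t).1
  rw [Metric.continuousWithinAt_iff] at hct
  obtain ⟨δ, hδ, hδ'⟩ := hct (ε / 4) (by positivity)
  obtain ⟨q, hq1, hq2⟩ := exists_rat_btwn (lt_add_of_pos_right t (by positivity : (0 : ℝ) < δ / 2))
  have hqM : (M : ℚ) ≤ q := by
    have h9 : (M : ℝ) < (q : ℝ) := lt_of_le_of_lt ht hq1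
    exact_mod_cast h9.le
  have hqIci : (q : ℝ) ∈ Ici t := le_of_lt hq1
  have hqd : dist (q : ℝ) t < δ := by
    rw [Real.dist_eq, abs_of_nonneg (by linarith)]
    linarith
  have h1 := hδ' hqIci hqd
  have h2 := hM q hqM
  calc dist ((μ[U t|ℱ t]) ω) (Y' ω)
      ≤ dist ((μ[U t|ℱ t]) ω) ((μ[U (q : ℝ)|ℱ (q : ℝ)]) ω)
        + dist ((μ[U (q : ℝ)|ℱ (q : ℝ)]) ω) (Y' ω) := dist_triangle _ _ _
    _ < ε / 4 + ε / 2 := add_lt_add (by rwa [dist_comm] at h1) h2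
    _ < ε := by linarith
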